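/- Consider a PJR-Exact run of an approval-based multi-winner election, fix j with 0 ≤ j ≤ k−1, and suppose the first j iterations of the run are all normal. If a candidate c ∈ C \ W_j satisfies ℓ_j(c) ≥ 1 and ℓ_j(c) = max_{c' ∈ C \ W_j} ℓ_j(c') (c has maximum dissatisfaction level among unelected candidates), then c is in a normal state after j iterations. -/

import Mathlib

open Finset

variable {C : Type*} [Fintype C] [DecidableEq C]

/-- The voters approving candidate `c`. -/
def approvers {n : ℕ} (A : Fin n → Finset C) (c : C) : Finset (Fin n) :=
  Finset.univ.filter (fun i => c ∈ A i)

/-- The exact quota `q = n / k`. -/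
def quota (n k : ℕ) : ℚ := (n : ℚ) / (k : ℚ)

/-- Remaining support of candidate `c` under vote fractions `f`. -/
def supp {n : ℕ} (A : Fin n → Finset C) (f : Fin n → ℚ) (c : C) : ℚ :=
  ∑ i ∈ approvers A c, f i

/-- The set `W_j = {w_1, …, w_j}` of the first `j` winners. -/
def Wset (w : ℕ → C) (j : ℕ) : Finset C := (Finset.Icc 1 j).image w

/-- The candidates approved by every voter in `Ns`, i.e. `⋂_{i ∈ Ns} A i`. -/
def commonApproved {n : ℕ} (A : Fin n → Finset C) (Ns : Finset (Fin n)) : Finset C :=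
  Finset.univ.filter (fun c => ∀ i ∈ Ns, c ∈ A i)

/-- `Ns` is an `ℓ`-cohesive group of voters: `|Ns| ≥ ℓ·n/k` and `|⋂_{i ∈ Ns} A i| ≥ ℓ`. -/
def Cohesive {n : ℕ} (A : Fin n → Finset C) (k ℓ : ℕ) (Ns : Finset (Fin n)) : Prop :=
  (ℓ : ℚ) * (n : ℚ) / (k : ℚ) ≤ (Ns.card : ℚ) ∧ ℓ ≤ (commonApproved A Ns).card

/-- `W` provides proportional justified representation for `(A, k)`. -/
def ProvidesPJR {n : ℕ} (A : Fin n → Finset C) (k : ℕ) (W : Finset C) : Prop :=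
  ∀ ℓ : ℕ, 1 ≤ ℓ → ℓ ≤ k → ∀ Ns : Finset (Fin n), Cohesive A k ℓ Ns →
    ℓ ≤ (W ∩ Ns.biUnion A).card

/-- `W` provides extended justified representation for `(A, k)`. -/
def ProvidesEJR {n : ℕ} (A : Fin n → Finset C) (k : ℕ) (W : Finset C) : Prop :=
  ∀ ℓ : ℕ, 1 ≤ ℓ → ℓ ≤ k → ∀ Ns : Finset (Fin n), Cohesive A k ℓ Ns →
    ∃ i ∈ Ns, ℓ ≤ (A i ∩ W).card

/-- The set of `ℓ`'s satisfying the dissatisfaction-level fixpoint equation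
`ℓ = ⌊(k/n)·|{i : c ∈ A_i ∧ |A_i ∩ W| < ℓ}|⌋`
(natural-number division `k * m / n` is exactly the floor `⌊(k/n)·m⌋`). -/
def dissatSet {n : ℕ} (A : Fin n → Finset C) (k : ℕ) (W : Finset C) (c : C) : Set ℕ :=
  {ℓ : ℕ | ℓ = k * (Finset.univ.filter (fun i => c ∈ A i ∧ (A i ∩ W).card < ℓ)).card / n}

/-- The dissatisfaction level `ℓ(c, W)`: the largest non-negative integer satisfying
the fixpoint equation. -/
noncomputable def dissat {n : ℕ} (A : Fin n → Finset C) (k : ℕ) (W : Finset C) (c : C) : ℕ :=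
  sSup (dissatSet A k W c)

/-- `ℓ_W(i, c) = max_{c' ∈ A_i \ (W ∪ {c})} ℓ(c', W)` (with `max ∅ = 0`). -/
noncomputable def dissatVoter {n : ℕ} (A : Fin n → Finset C) (k : ℕ) (W : Finset C)
    (i : Fin n) (c : C) : ℕ :=
  (A i \ insert c W).sup (dissat A k W)

/-- `ℓ_W(i) = max_{c ∈ A_i \ W} ℓ(c, W)` (with `max ∅ = 0`). -/
noncomputable def dissatVoterAll {n : ℕ} (A : Fin n → Finset C) (k : ℕ) (W : Finset C)
    (i : Fin n) : ℕ :=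
  (A i \ W).sup (dissat A k W)

/-- `g_i(c)` relative to the committee `W`. -/
noncomputable def gfun {n : ℕ} (A : Fin n → Finset C) (k : ℕ) (W : Finset C)
    (i : Fin n) (c : C) : ℚ :=
  if dissatVoter A k W i c ≤ (A i ∩ W).card then 0
  else ((dissatVoter A k W i c : ℚ) - ((A i ∩ W).card : ℚ) - 1) / (dissatVoter A k W i c : ℚ)

/-- Candidate `c ∉ W` is in a normal state (w.r.t. committee `W` and fractions `f`). -/
def NormalState {n : ℕ} (A : Fin n → Finset C) (k : ℕ) (f : Fin n → ℚ) (W : Finset C)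
    (c : C) : Prop :=
  (∀ i : Fin n, c ∈ A i → (A i ∩ W).card < dissatVoter A k W i c →
      ((dissatVoter A k W i c : ℚ) - ((A i ∩ W).card : ℚ)) / (dissatVoter A k W i c : ℚ) ≤ f i) ∧
  quota n k ≤ ∑ i ∈ approvers A c, (f i - gfun A k W i c)

/-- Candidate `c ∉ W` is in a starving state. -/
def StarvingState {n : ℕ} (A : Fin n → Finset C) (k : ℕ) (f : Fin n → ℚ) (W : Finset C)
    (c : C) : Prop :=
  ∃ i : Fin n, c ∈ A i ∧ (A i ∩ W).card < dissatVoter A k W i c ∧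
    f i < ((dissatVoter A k W i c : ℚ) - ((A i ∩ W).card : ℚ)) / (dissatVoter A k W i c : ℚ)

/-- Candidate `c ∉ W` is in an eager state. -/
def EagerState {n : ℕ} (A : Fin n → Finset C) (k : ℕ) (f : Fin n → ℚ) (W : Finset C)
    (c : C) : Prop :=
  ¬ StarvingState A k f W c ∧ quota n k ≤ supp A f c ∧
    ∑ i ∈ approvers A c, (f i - gfun A k W i c) < quota n k

/-- A run of a voting rule in the PJR-Exact family: a sequence of distinct winners
`w 1, …, w k` together with fraction functions `f 0, …, f k` satisfying the three
defining conditions of the family. -/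
structure PJRExactRun (n k : ℕ) (A : Fin n → Finset C) where
  w : ℕ → C
  f : ℕ → Fin n → ℚ
  /-- the selected candidates are pairwise distinct -/
  w_inj : ∀ j j' : ℕ, 1 ≤ j → j ≤ k → 1 ≤ j' → j' ≤ k → w j = w j' → j = j'
  /-- initially each voter has her whole vote -/
  f_zero : ∀ i, f 0 i = 1
  /-- fractions stay non-negative -/
  f_nonneg : ∀ j, 1 ≤ j → j ≤ k → ∀ i, 0 ≤ f j i
  /-- fractions never increase -/
  f_mono : ∀ j, 1 ≤ j → j ≤ k → ∀ i, f j i ≤ f (j - 1) i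
  /-- if the remaining support of the winner exceeds the quota, exactly `q` votes are removed -/
  remove_big : ∀ j, 1 ≤ j → j ≤ k → quota n k < supp A (f (j - 1)) (w j) →
    ∑ i ∈ approvers A (w j), (f (j - 1) i - f j i) = quota n k
  /-- if the remaining support of the winner is at most the quota, all of it is removed -/
  remove_small : ∀ j, 1 ≤ j → j ≤ k → supp A (f (j - 1)) (w j) ≤ quota n k →
    ∀ i, w j ∈ A i → f j i = 0
  /-- voters not approving the winner keep their fractions -/
  f_untouched : ∀ j, 1 ≤ j → j ≤ k → ∀ i, w j ∉ A i → f j i = f (j - 1) i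
  /-- if some unelected candidate has remaining support at least `q`,
  then so has the selected one -/
  greedy : ∀ j, 1 ≤ j → j ≤ k →
    (∃ c, c ∉ Wset w (j - 1) ∧ quota n k ≤ supp A (f (j - 1)) c) →
    quota n k ≤ supp A (f (j - 1)) (w j)

/-- Iteration `j` of a PJR-Exact run is normal. -/
def NormalIteration {n k : ℕ} {A : Fin n → Finset C} (R : PJRExactRun n k A) (j : ℕ) : Prop :=
  NormalState A k (R.f (j - 1)) (Wset R.w (j - 1)) (R.w j) ∧
  ∀ i : Fin n, R.w j ∈ A i →
    (A i ∩ Wset R.w (j - 1)).card < dissatVoter A k (Wset R.w (j - 1)) i (R.w j) →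
    ((dissatVoter A k (Wset R.w (j - 1)) i (R.w j) : ℚ) - ((A i ∩ Wset R.w j).card : ℚ)) /
      (dissatVoter A k (Wset R.w (j - 1)) i (R.w j) : ℚ) ≤ R.f j i

set_option linter.unusedSectionVars false
section Aux
variable {C : Type*} [Fintype C] [DecidableEq C] {n : ℕ}

lemma mem_dissatSet_le_k (A : Fin n → Finset C) (k : ℕ) (W : Finset C) (c : C)
    {ℓ : ℕ} (h : ℓ ∈ dissatSet A k W c) : ℓ ≤ k := by
  rw [dissatSet, Set.mem_setOf_eq] at h
  rcases Nat.eq_zero_or_pos n with hn | hn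
  · subst hn; simp at h; omega
  · have hm : (Finset.univ.filter (fun i => c ∈ A i ∧ (A i ∩ W).card < ℓ)).card ≤ n := by
      simpa using Finset.card_filter_le Finset.univ (fun i => c ∈ A i ∧ (A i ∩ W).card < ℓ)
    exact le_trans (le_of_eq h) (le_trans (Nat.div_le_div_right (Nat.mul_le_mul_left k hm))
      (le_of_eq (Nat.mul_div_cancel k hn)))

lemma zero_mem_dissatSet (A : Fin n → Finset C) (k : ℕ) (W : Finset C) (c : C) :
    0 ∈ dissatSet A k W c := by
  simp [dissatSet]

lemma dissat_mem (A : Fin n → Finset C) (k : ℕ) (W : Finset C) (c : C) :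
    dissat A k W c ∈ dissatSet A k W c :=
  Nat.sSup_mem ⟨0, zero_mem_dissatSet A k W c⟩ ⟨k, fun _ h => mem_dissatSet_le_k A k W c h⟩

lemma le_dissat (A : Fin n → Finset C) (k : ℕ) (W : Finset C) (c : C)
    {ℓ : ℕ} (h : ℓ ∈ dissatSet A k W c) : ℓ ≤ dissat A k W c :=
  le_csSup ⟨k, fun _ h => mem_dissatSet_le_k A k W c h⟩ h

lemma le_dissat_of_le_F (A : Fin n → Finset C) (k : ℕ) (W : Finset C) (c : C)
    {ℓ : ℕ} (h : ℓ ≤ k * (Finset.univ.filter (fun i => c ∈ A i ∧ (A i ∩ W).card < ℓ)).card / n) :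
    ℓ ≤ dissat A k W c := by
  set F : ℕ → ℕ := fun m => k * (Finset.univ.filter (fun i => c ∈ A i ∧ (A i ∩ W).card < m)).card / n with hF
  have hmono : Monotone F := by
    intro a b hab
    exact Nat.div_le_div_right (Nat.mul_le_mul_left k (Finset.card_le_card (by
      intro i hi; simp only [Finset.mem_filter] at hi ⊢; exact ⟨hi.1, hi.2.1, lt_of_lt_of_le hi.2.2 hab⟩)))
  have hFk : ∀ m, F m ≤ k := by
    intro m
    rcases Nat.eq_zero_or_pos n with hn | hn
    · subst hn; simp [hF]
    · have hm : (Finset.univ.filter (fun i => c ∈ A i ∧ (A i ∩ W).card < m)).card ≤ n := by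
        simpa using Finset.card_filter_le Finset.univ (fun i => c ∈ A i ∧ (A i ∩ W).card < m)
      calc F m ≤ k * n / n := Nat.div_le_div_right (Nat.mul_le_mul_left k hm)
        _ = k := Nat.mul_div_cancel k hn
  set S : Set ℕ := {m | m ≤ F m} with hS
  have hbdd : BddAbove S := ⟨k, fun m hm => le_trans hm (hFk m)⟩
  have hne : S.Nonempty := ⟨ℓ, h⟩
  have hM : sSup S ∈ S := Nat.sSup_mem hne hbdd
  have hfix : F (sSup S) = sSup S := by
    have h1 : F (sSup S) ∈ S := hmono hM
    exact le_antisymm (le_csSup hbdd h1) hM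
  have : sSup S ∈ dissatSet A k W c := hfix.symm
  exact le_trans (le_csSup hbdd (show ℓ ∈ S from h)) (le_dissat A k W c this)

lemma dissat_antitone (A : Fin n → Finset C) (k : ℕ) {W W' : Finset C} (hWW : W ⊆ W') (c : C) :
    dissat A k W' c ≤ dissat A k W c := by
  set ℓ := dissat A k W' c with hl
  have hmem := dissat_mem A k W' c
  rw [dissatSet, Set.mem_setOf_eq] at hmem
  apply le_dissat_of_le_F
  refine le_trans (le_of_eq hmem) (Nat.div_le_div_right (Nat.mul_le_mul_left k
    (Finset.card_le_card ?_)))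
  intro i hi
  simp only [Finset.mem_filter] at hi ⊢
  exact ⟨hi.1, hi.2.1, lt_of_le_of_lt (Finset.card_le_card
    (Finset.inter_subset_inter (Finset.Subset.refl _) hWW)) hi.2.2⟩

lemma ratio_mono {w x y : ℚ} (hw : 0 ≤ w) (hx : 0 < x) (hxy : x ≤ y) :
    (x - w) / x ≤ (y - w) / y := by
  have hy : 0 < y := lt_of_lt_of_le hx hxy
  rw [div_le_div_iff₀ hx hy]
  nlinarith

lemma Wset_zero (w : ℕ → C) : Wset w 0 = ∅ := by simp [Wset]

lemma Wset_succ (w : ℕ → C) (j : ℕ) (hj : 1 ≤ j) :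
    Wset w j = insert (w j) (Wset w (j - 1)) := by
  rw [Wset, Wset]
  have : Finset.Icc 1 j = insert j (Finset.Icc 1 (j - 1)) := by
    ext m; simp only [Finset.mem_Icc, Finset.mem_insert]; omega
  rw [this, Finset.image_insert]

lemma Wset_mono (w : ℕ → C) {a b : ℕ} (h : a ≤ b) : Wset w a ⊆ Wset w b :=
  Finset.image_subset_image (Finset.Icc_subset_Icc_right h)

end Aux
lemma pjr_invariant {C : Type*} [Fintype C] [DecidableEq C] {n k : ℕ}
    (hk : 1 ≤ k) (A : Fin n → Finset C) (R : PJRExactRun n k A) :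
    ∀ j, j ≤ k → (∀ j', 1 ≤ j' → j' ≤ j → NormalIteration R j') →
    ∀ (i : Fin n) (c' : C), c' ∈ A i → c' ∉ Wset R.w j →
      (A i ∩ Wset R.w j).card < dissat A k (Wset R.w j) c' →
      ((dissat A k (Wset R.w j) c' : ℚ) - ((A i ∩ Wset R.w j).card : ℚ)) /
        (dissat A k (Wset R.w j) c' : ℚ) ≤ R.f j i := by
  intro j
  induction j with
  | zero =>
    intro _ _ i c' hci hcW hlt
    rw [Wset_zero] at hlt ⊢
    simp only [Finset.inter_empty, Finset.card_empty] at hlt ⊢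
    rw [R.f_zero i, Nat.cast_zero, sub_zero]
    have hd : (0:ℚ) < (dissat A k (∅:Finset C) c' : ℚ) := by exact_mod_cast hlt
    rw [div_self (ne_of_gt hd)]
  | succ m ih =>
    intro hjk hnorm i c' hci hcW hlt
    have hWsub : Wset R.w m ⊆ Wset R.w (m + 1) := Wset_mono R.w (Nat.le_succ m)
    have hins : Wset R.w (m + 1) = insert (R.w (m + 1)) (Wset R.w m) := by
      have := Wset_succ R.w (m + 1) (by omega)
      simpa using this
    have hd1 : dissat A k (Wset R.w (m + 1)) c' ≤ dissat A k (Wset R.w m) c' :=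
      dissat_antitone A k hWsub c'
    have hcW0 : c' ∉ Wset R.w m := fun h => hcW (hWsub h)
    have hcard01 : (A i ∩ Wset R.w m).card ≤ (A i ∩ Wset R.w (m + 1)).card :=
      Finset.card_le_card (Finset.inter_subset_inter (Finset.Subset.refl _) hWsub)
    have hd1pos : (0:ℚ) < (dissat A k (Wset R.w (m + 1)) c' : ℚ) := by
      have : 0 < dissat A k (Wset R.w (m + 1)) c' := by omega
      exact_mod_cast this
    by_cases hwi : R.w (m + 1) ∈ A i
    · -- the new winner is approved by voter i; use normality of iteration m+1
      have hcne : c' ≠ R.w (m + 1) := by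
        intro h; apply hcW; rw [hins, h]; exact Finset.mem_insert_self _ _
      have hmem : c' ∈ A i \ insert (R.w (m + 1)) (Wset R.w m) := by
        simp [Finset.mem_sdiff, hci, hcne, hcW0]
      have hL : dissat A k (Wset R.w m) c' ≤ dissatVoter A k (Wset R.w m) i (R.w (m + 1)) :=
        Finset.le_sup hmem
      have hnI := hnorm (m + 1) (by omega) le_rfl
      have hpre : (A i ∩ Wset R.w m).card < dissatVoter A k (Wset R.w m) i (R.w (m + 1)) := by
        omega
      have hf := hnI.2 i hwi hpre
      refine le_trans (ratio_mono ?_ hd1pos ?_) hf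
      · positivity
      · exact_mod_cast le_trans hd1 hL
    · -- voter i keeps her fraction
      have hfi : R.f (m + 1) i = R.f m i := R.f_untouched (m + 1) (by omega) hjk i hwi
      have hAW : A i ∩ Wset R.w (m + 1) = A i ∩ Wset R.w m := by
        rw [hins]
        ext x
        simp only [Finset.mem_inter, Finset.mem_insert]
        constructor
        · rintro ⟨hx, hx'⟩
          rcases hx' with h | h
          · exact absurd (h ▸ hx) hwi
          · exact ⟨hx, h⟩
        · rintro ⟨hx, h⟩; exact ⟨hx, Or.inr h⟩
      rw [hfi, hAW]
      rw [hAW] at hlt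
      have hih := ih (by omega) (fun j' h1 h2 => hnorm j' h1 (by omega)) i c' hci hcW0 (by omega)
      refine le_trans (ratio_mono ?_ hd1pos ?_) hih
      · positivity
      · exact_mod_cast hd1
/-- after `j` normal iterations, an unelected candidate with maximum
dissatisfaction level among unelected candidates, and with dissatisfaction level at
least 1, is in a normal state. -/
theorem max_dissat_is_normal {C : Type*} [Fintype C] [DecidableEq C] {n k : ℕ}
    (hn : 0 < n) (hk : 1 ≤ k) (hkC : k ≤ Fintype.card C)
    (A : Fin n → Finset C) (R : PJRExactRun n k A)
    (j : ℕ) (hjk : j ≤ k - 1)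
    (hnormal : ∀ j' : ℕ, 1 ≤ j' → j' ≤ j → NormalIteration R j')
    (c : C) (hc : c ∉ Wset R.w j)
    (h1 : 1 ≤ dissat A k (Wset R.w j) c)
    (hmax : ∀ c' : C, c' ∉ Wset R.w j →
      dissat A k (Wset R.w j) c' ≤ dissat A k (Wset R.w j) c) :
    NormalState A k (R.f j) (Wset R.w j) c := by
  have hjk' : j ≤ k := le_trans hjk (Nat.sub_le k 1)
  have hinv := pjr_invariant hk A R j hjk' hnormal
  have hf0 : ∀ i, 0 ≤ R.f j i := by
    intro i
    rcases Nat.eq_zero_or_pos j with hj | hj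
    · subst hj; rw [R.f_zero]; norm_num
    · exact R.f_nonneg j hj hjk' i
  set W := Wset R.w j with hW
  set ℓ := dissat A k W c with hl
  have hℓpos : (0:ℚ) < (ℓ:ℚ) := by exact_mod_cast h1
  -- voters for whom dissatVoter exceeds their satisfaction get the invariant bound
  have hwit : ∀ i : Fin n, c ∈ A i → (A i ∩ W).card < dissatVoter A k W i c →
      ((dissatVoter A k W i c : ℚ) - ((A i ∩ W).card : ℚ)) / (dissatVoter A k W i c : ℚ)
        ≤ R.f j i := by
    intro i hci hlt
    have hne : (A i \ insert c W).Nonempty := by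
      by_contra h
      rw [Finset.not_nonempty_iff_eq_empty] at h
      have : dissatVoter A k W i c = 0 := by rw [dissatVoter, h, Finset.sup_empty]; rfl
      omega
    obtain ⟨c'', hc''mem, hc''⟩ := Finset.exists_mem_eq_sup _ hne (dissat A k W)
    rw [Finset.mem_sdiff, Finset.mem_insert] at hc''mem
    have hc''A : c'' ∈ A i := hc''mem.1
    have hc''W : c'' ∉ W := fun h => hc''mem.2 (Or.inr h)
    have heq : dissatVoter A k W i c = dissat A k W c'' := hc''
    rw [heq] at hlt ⊢
    exact hinv i c'' hc''A hc''W hlt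
  constructor
  · exact hwit
  · -- the support condition
    have key : ∀ i : Fin n, c ∈ A i →
        gfun A k W i c ≤ R.f j i ∧
        ((A i ∩ W).card < ℓ → 1 / (ℓ:ℚ) ≤ R.f j i - gfun A k W i c) := by
      intro i hci
      by_cases hcase : dissatVoter A k W i c ≤ (A i ∩ W).card
      · rw [gfun, if_pos hcase]
        refine ⟨hf0 i, fun hlt => ?_⟩
        have hb := hinv i c hci hc hlt
        rw [sub_zero]
        refine le_trans ?_ hb
        rw [div_le_div_iff₀ hℓpos hℓpos]
        have : ((A i ∩ W).card : ℚ) + 1 ≤ (ℓ:ℚ) := by exact_mod_cast hlt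
        nlinarith
      · push_neg at hcase
        have hb := hwit i hci hcase
        have hLpos : (0:ℚ) < (dissatVoter A k W i c : ℚ) := by
          have : 0 < dissatVoter A k W i c := by omega
          exact_mod_cast this
        rw [gfun, if_neg (by omega)]
        constructor
        · refine le_trans ?_ hb
          rw [div_le_div_iff₀ hLpos hLpos]
          nlinarith
        · intro _
          have hLl : (dissatVoter A k W i c : ℚ) ≤ (ℓ:ℚ) := by
            -- the witness candidate is unelected, so its dissat is at most ℓ
            have hne : (A i \ insert c W).Nonempty := by
              by_contra h
              rw [Finset.not_nonempty_iff_eq_empty] at h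
              have : dissatVoter A k W i c = 0 := by
                rw [dissatVoter, h, Finset.sup_empty]; rfl
              omega
            obtain ⟨c'', hc''mem, hc''⟩ := Finset.exists_mem_eq_sup _ hne (dissat A k W)
            rw [Finset.mem_sdiff, Finset.mem_insert] at hc''mem
            have heq : dissatVoter A k W i c = dissat A k W c'' := hc''
            have : dissatVoter A k W i c ≤ ℓ := by
              rw [heq]
              exact hmax c'' (fun h => hc''mem.2 (Or.inr h))
            exact_mod_cast this
          have h1L : 1 / (ℓ:ℚ) ≤ 1 / (dissatVoter A k W i c : ℚ) :=
            one_div_le_one_div_of_le hLpos hLl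
          refine le_trans h1L ?_
          have : R.f j i - ((dissatVoter A k W i c : ℚ) - ((A i ∩ W).card : ℚ) - 1) /
              (dissatVoter A k W i c : ℚ)
              ≥ ((dissatVoter A k W i c : ℚ) - ((A i ∩ W).card : ℚ)) /
                (dissatVoter A k W i c : ℚ)
              - ((dissatVoter A k W i c : ℚ) - ((A i ∩ W).card : ℚ) - 1) /
                (dissatVoter A k W i c : ℚ) := by linarith
          refine le_trans ?_ this
          rw [div_sub_div_same]
          ring_nf
          exact le_refl _
    -- counting: at least ℓ·n/k voters contribute at least 1/ℓ each
    set S := Finset.univ.filter (fun i => c ∈ A i ∧ (A i ∩ W).card < ℓ) with hS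
    have hmemd := dissat_mem A k W c
    rw [dissatSet, Set.mem_setOf_eq] at hmemd
    have hcount : ℓ * n ≤ k * S.card := by
      have := (Nat.le_div_iff_mul_le hn).mp (le_of_eq hmemd)
      simpa [hS] using this
    have hSsub : S ⊆ approvers A c := by
      intro i hi
      rw [hS, Finset.mem_filter] at hi
      rw [approvers, Finset.mem_filter]
      exact ⟨hi.1, hi.2.1⟩
    have hsum1 : ∑ i ∈ S, (R.f j i - gfun A k W i c) ≤
        ∑ i ∈ approvers A c, (R.f j i - gfun A k W i c) := by
      refine Finset.sum_le_sum_of_subset_of_nonneg hSsub ?_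
      intro i hi _
      have hci : c ∈ A i := by rw [approvers, Finset.mem_filter] at hi; exact hi.2
      linarith [(key i hci).1]
    have hsum2 : (S.card : ℚ) * (1 / (ℓ:ℚ)) ≤ ∑ i ∈ S, (R.f j i - gfun A k W i c) := by
      have := Finset.card_nsmul_le_sum S (fun i => R.f j i - gfun A k W i c) (1 / (ℓ:ℚ)) ?_
      · simpa [nsmul_eq_mul] using this
      · intro i hi
        rw [hS, Finset.mem_filter] at hi
        exact (key i hi.2.1).2 hi.2.2
    have hq : quota n k ≤ (S.card : ℚ) * (1 / (ℓ:ℚ)) := by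
      rw [quota, mul_one_div, div_le_div_iff₀ (by exact_mod_cast hk : (0:ℚ) < (k:ℚ)) hℓpos]
      have : (ℓ:ℚ) * (n:ℚ) ≤ (k:ℚ) * (S.card : ℚ) := by exact_mod_cast hcount
      nlinarith
    linarith
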